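/- Let θ ∈ (π/8, π/2], x ∈ ℂ, r > 0, and set y := r e^{iθ} and g(t) := exp( r^{4/3}·f_θ(t) − x y^{2/3} t² ) for t ∈ ℂ (principal powers of y). Then both of the following integrals are absolutely convergent and equal: ∫_{−∞}^{∞} g(s e^{−iθ/3})·e^{−iθ/3} ds = ∫_{−∞}^{∞} g( 4^{−1/3}·e^{5iπ/6} + s·e^{i(π−4θ)/6} )·e^{i(π−4θ)/6} ds. -/

import Mathlib

open Real MeasureTheory

/-- The phase function `f_θ(t) = e^{4iθ/3}·(i t − t⁴)`. -/
noncomputable def f (θ : ℝ) (t : ℂ) : ℂ :=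
  Complex.exp (Complex.I * (4 * (θ : ℂ) / 3)) * (Complex.I * t - t ^ 4)

open Filter Topology

lemma poly_exp (t : ℝ) (ht : 0 ≤ t) : (1 + t) ^ 4 ≤ 40 * Real.exp (t ^ 2) := by
  have h1 : (1 + t) ^ 4 ≤ 8 + 8 * t ^ 4 := by nlinarith [sq_nonneg (1 - t), sq_nonneg (1 - t^2), sq_nonneg t, pow_nonneg ht 3]
  have h2 : 1 + t^2/2 ≤ Real.exp (t^2/2) := by linarith [Real.add_one_le_exp (t^2/2)]
  have h3 : (1 + t^2/2)^2 ≤ Real.exp (t^2) := by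
    calc (1 + t^2/2)^2 ≤ Real.exp (t^2/2)^2 := by nlinarith [Real.exp_pos (t^2/2), sq_nonneg t]
    _ = Real.exp (t^2) := by rw [sq, ← Real.exp_add]; ring_nf
  have h4 : 1 ≤ Real.exp (t^2) := Real.one_le_exp (by positivity)
  nlinarith [Real.exp_pos (t^2), sq_nonneg t, pow_nonneg ht 4]

lemma absorb (κ C : ℝ) (hκ : 0 < κ) :
    ∃ D : ℝ, ∀ t : ℝ, 0 ≤ t → C * (1 + t) ^ 3 + 2 * t ^ 2 ≤ κ * t ^ 4 + D := by
  set C' := |C| + 1 with hC'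
  have hC1 : 0 < C' := by positivity
  have hCle : C ≤ C' := le_trans (le_abs_self C) (by simp [hC'])
  set T := max 1 ((8 * C' + 2) / κ) with hT
  have hT1 : 1 ≤ T := le_max_left _ _
  have hT2' : 8 * C' + 2 ≤ κ * T := by
    have := le_max_right 1 ((8 * C' + 2) / κ)
    rw [div_le_iff₀ hκ] at this; linarith [this]
  refine ⟨C' * (1 + T) ^ 3 + 2 * T ^ 2, fun t ht => ?_⟩
  rcases le_total t T with h | h
  · have hp : (1 + t) ^ 3 ≤ (1 + T) ^ 3 := by gcongr <;> linarith
    have h1 : C * (1 + t) ^ 3 ≤ C' * (1 + T) ^ 3 := by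
      calc C * (1 + t) ^ 3 ≤ C' * (1 + t) ^ 3 := by nlinarith [pow_nonneg (by linarith : (0:ℝ) ≤ 1 + t) 3]
      _ ≤ C' * (1 + T) ^ 3 := by nlinarith
    nlinarith [pow_nonneg ht 4, mul_pos hκ (pow_pos (lt_of_lt_of_le one_pos hT1) 4), sq_nonneg t, mul_nonneg hκ.le (pow_nonneg ht 4)]
  · have ht1 : 1 ≤ t := hT1.trans h
    have h8 : (1 + t) ^ 3 ≤ 8 * t ^ 3 := by nlinarith [sq_nonneg t, pow_nonneg ht 3]
    have h9 : C * (1 + t) ^ 3 + 2 * t ^ 2 ≤ (8 * C' + 2) * t ^ 3 := by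
      have : C * (1 + t)^3 ≤ 8 * C' * t^3 := by nlinarith [pow_nonneg ht 3, pow_nonneg (by linarith : (0:ℝ) ≤ 1+t) 3]
      nlinarith [pow_nonneg ht 3, sq_nonneg t]
    have h10 : (8 * C' + 2) * t ^ 3 ≤ κ * t ^ 4 := by
      have : (8 * C' + 2) ≤ κ * t := by nlinarith [mul_le_mul_of_nonneg_left h hκ.le]
      nlinarith [pow_nonneg ht 3]
    nlinarith [pow_pos (lt_of_lt_of_le one_pos hT1) 3, sq_nonneg T, pow_nonneg (by linarith : (0:ℝ) ≤ 1+T) 3]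

noncomputable def wd (α dd τ : ℝ) : ℂ := Complex.exp ((↑(α + τ * dd) : ℂ) * Complex.I)
noncomputable def Pt (p : ℂ) (α dd τ s : ℝ) : ℂ := (τ : ℂ) * p + (s : ℂ) * wd α dd τ
noncomputable def qq (ρ α : ℝ) : ℂ := (ρ : ℂ) * Complex.exp ((↑(-(4 * α)) : ℂ) * Complex.I)
noncomputable def Ee (b₁ b₂ q t : ℂ) : ℂ := b₁ * t + b₂ * t ^ 2 - q * t ^ 4
noncomputable def Kc (p : ℂ) : ℝ := 1 + 3 * ‖p‖
noncomputable def CC (ρ : ℝ) (b₁ b₂ p : ℂ) : ℝ :=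
  ‖b₁‖ * Kc p + ‖b₂‖ * Kc p ^ 2 + 12 * ρ * ‖p‖ * Kc p ^ 3
noncomputable def CC3 (ρ : ℝ) (b₁ b₂ p : ℂ) : ℝ :=
  ‖b₁‖ + 2 * ‖b₂‖ * Kc p + 4 * ρ * Kc p ^ 3

lemma wd_norm (α dd τ : ℝ) : ‖wd α dd τ‖ = 1 := by
  simpa [wd] using Complex.norm_exp_ofReal_mul_I (α + τ * dd)

lemma qq_norm (ρ α : ℝ) (hρ : 0 ≤ ρ) : ‖qq ρ α‖ = ρ := by
  rw [qq, norm_mul, Complex.norm_real, Real.norm_eq_abs,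
    Complex.norm_exp_ofReal_mul_I, abs_of_nonneg hρ, mul_one]

lemma Kc_one_le (p : ℂ) : 1 ≤ Kc p := by have := norm_nonneg p; rw [Kc]; linarith

lemma re_q4 (ρ α dd τ s : ℝ) :
    (qq ρ α * ((s : ℂ) * wd α dd τ) ^ 4).re = ρ * s ^ 4 * Real.cos (4 * (τ * dd)) := by
  have h : qq ρ α * ((s : ℂ) * wd α dd τ) ^ 4
      = ((ρ * s ^ 4 : ℝ) : ℂ) * Complex.exp ((↑(4 * (τ * dd)) : ℂ) * Complex.I) := by
    rw [qq, wd, mul_pow, ← Complex.exp_nat_mul, ← Complex.ofReal_pow]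
    rw [show (ρ:ℂ) * Complex.exp ((↑(-(4 * α)) : ℂ) * Complex.I) * ((↑(s^4):ℂ) * Complex.exp ((4:ℕ) * ((↑(α + τ * dd) : ℂ) * Complex.I)))
        = ((ρ * s ^ 4 : ℝ) : ℂ) * (Complex.exp ((↑(-(4 * α)) : ℂ) * Complex.I) * Complex.exp ((4:ℕ) * ((↑(α + τ * dd) : ℂ) * Complex.I))) by push_cast; ring]
    rw [← Complex.exp_add]
    congr 2
    push_cast; ring
  rw [h, Complex.re_ofReal_mul, Complex.exp_ofReal_mul_I_re]

lemma Pt_norm (p : ℂ) (α dd δ τ s : ℝ) (hδ : 0 ≤ δ) (hδ2 : δ ≤ 2)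
    (hτ : τ ∈ Set.Icc (-δ) (1 + δ)) : ‖Pt p α dd τ s‖ ≤ Kc p * (1 + |s|) := by
  have h1 : ‖Pt p α dd τ s‖ ≤ |τ| * ‖p‖ + |s| := by
    calc ‖Pt p α dd τ s‖ ≤ ‖(τ:ℂ) * p‖ + ‖(s:ℂ) * wd α dd τ‖ := norm_add_le _ _
    _ = |τ| * ‖p‖ + |s| := by rw [norm_mul, norm_mul, wd_norm, Complex.norm_real, Complex.norm_real, mul_one, Real.norm_eq_abs, Real.norm_eq_abs]
  have hτ3 : |τ| ≤ 3 := abs_le.mpr ⟨by linarith [hτ.1], by linarith [hτ.2]⟩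
  have := norm_nonneg p; have := abs_nonneg s; have := abs_nonneg τ
  rw [Kc]; nlinarith [mul_le_mul_of_nonneg_right hτ3 (norm_nonneg p)]

lemma master_re (ρ α dd : ℝ) (hρ : 0 < ρ) (b₁ b₂ p : ℂ) (δ m τ s : ℝ)
    (hδ : 0 ≤ δ) (hδ2 : δ ≤ 2) (hτ : τ ∈ Set.Icc (-δ) (1 + δ))
    (hm : m ≤ Real.cos (4 * (τ * dd))) :
    (Ee b₁ b₂ (qq ρ α) (Pt p α dd τ s)).re ≤
      CC ρ b₁ b₂ p * (1 + |s|) ^ 3 - ρ * m * s ^ 4 := by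
  set u := Pt p α dd τ s with hu_def
  set w := wd α dd τ with hw_def
  set q := qq ρ α with hq_def
  set K := Kc p with hK_def
  set M := K * (1 + |s|) with hM_def
  have hK1 : 1 ≤ K := Kc_one_le p
  have hs1 : (1:ℝ) ≤ 1 + |s| := by have := abs_nonneg s; linarith
  have hM0 : 0 ≤ M := by positivity
  have hu : ‖u‖ ≤ M := Pt_norm p α dd δ τ s hδ hδ2 hτ
  have hb : ‖(s:ℂ) * w‖ ≤ M := by
    rw [norm_mul, wd_norm, mul_one, Complex.norm_real, Real.norm_eq_abs]
    nlinarith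
  have hE : Ee b₁ b₂ q u = b₁ * u + b₂ * u ^ 2 - q * ((s:ℂ) * w) ^ 4
      - q * (u ^ 4 - ((s:ℂ) * w) ^ 4) := by rw [Ee]; ring
  have hdiff : u - (s:ℂ) * w = (τ:ℂ) * p := by rw [hu_def, Pt]; ring
  have hd4 : ‖u ^ 4 - ((s:ℂ) * w) ^ 4‖ ≤ 3 * ‖p‖ * (4 * M ^ 3) := by
    have hfac : u ^ 4 - ((s:ℂ) * w) ^ 4
        = (u - (s:ℂ)*w) * (u^3 + u^2 * ((s:ℂ)*w) + u * ((s:ℂ)*w)^2 + ((s:ℂ)*w)^3) := by ring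
    rw [hfac, norm_mul, hdiff]
    have h1 : ‖(τ:ℂ) * p‖ ≤ 3 * ‖p‖ := by
      rw [norm_mul, Complex.norm_real, Real.norm_eq_abs]
      have hτ3 : |τ| ≤ 3 := abs_le.mpr ⟨by linarith [hτ.1], by linarith [hτ.2]⟩
      nlinarith [norm_nonneg p]
    have h2 : ‖u^3 + u^2 * ((s:ℂ)*w) + u * ((s:ℂ)*w)^2 + ((s:ℂ)*w)^3‖ ≤ 4 * M ^ 3 := by
      have e1 : ‖u^3‖ ≤ M^3 := by rw [norm_pow]; exact pow_le_pow_left₀ (norm_nonneg _) hu 3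
      have e2 : ‖u^2 * ((s:ℂ)*w)‖ ≤ M^3 := by
        rw [norm_mul, norm_pow]
        calc ‖u‖^2 * ‖(s:ℂ)*w‖ ≤ M^2 * M :=
              mul_le_mul (pow_le_pow_left₀ (norm_nonneg _) hu 2) hb (norm_nonneg _) (by positivity)
        _ = M^3 := by ring
      have e3 : ‖u * ((s:ℂ)*w)^2‖ ≤ M^3 := by
        rw [norm_mul, norm_pow]
        calc ‖u‖ * ‖(s:ℂ)*w‖^2 ≤ M * M^2 :=
              mul_le_mul hu (pow_le_pow_left₀ (norm_nonneg _) hb 2) (by positivity) hM0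
        _ = M^3 := by ring
      have e4 : ‖((s:ℂ)*w)^3‖ ≤ M^3 := by rw [norm_pow]; exact pow_le_pow_left₀ (norm_nonneg _) hb 3
      calc ‖u^3 + u^2 * ((s:ℂ)*w) + u * ((s:ℂ)*w)^2 + ((s:ℂ)*w)^3‖
          ≤ ‖u^3 + u^2 * ((s:ℂ)*w) + u * ((s:ℂ)*w)^2‖ + ‖((s:ℂ)*w)^3‖ := norm_add_le _ _
        _ ≤ ‖u^3 + u^2 * ((s:ℂ)*w)‖ + ‖u * ((s:ℂ)*w)^2‖ + ‖((s:ℂ)*w)^3‖ := by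
              linarith [norm_add_le (u^3 + u^2*((s:ℂ)*w)) (u * ((s:ℂ)*w)^2)]
        _ ≤ ‖u^3‖ + ‖u^2 * ((s:ℂ)*w)‖ + ‖u * ((s:ℂ)*w)^2‖ + ‖((s:ℂ)*w)^3‖ := by
              linarith [norm_add_le (u^3) (u^2*((s:ℂ)*w))]
        _ ≤ 4 * M^3 := by linarith
    calc ‖(τ:ℂ)*p‖ * ‖u^3 + u^2 * ((s:ℂ)*w) + u * ((s:ℂ)*w)^2 + ((s:ℂ)*w)^3‖
        ≤ (3 * ‖p‖) * (4 * M^3) := by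
          apply mul_le_mul h1 h2 (norm_nonneg _) (by positivity)
      _ = 3 * ‖p‖ * (4 * M^3) := by ring
  rw [hE]
  simp only [Complex.sub_re, Complex.add_re]
  have r1 : (b₁ * u).re ≤ ‖b₁‖ * M := by
    calc (b₁ * u).re ≤ ‖b₁ * u‖ := Complex.re_le_norm _
    _ = ‖b₁‖ * ‖u‖ := norm_mul _ _
    _ ≤ ‖b₁‖ * M := by gcongr
  have r2 : (b₂ * u ^ 2).re ≤ ‖b₂‖ * M ^ 2 := by
    calc (b₂ * u^2).re ≤ ‖b₂ * u^2‖ := Complex.re_le_norm _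
    _ = ‖b₂‖ * ‖u‖^2 := by rw [norm_mul, norm_pow]
    _ ≤ ‖b₂‖ * M^2 := by gcongr
  have r3 : ρ * m * s ^ 4 ≤ (q * ((s:ℂ) * w) ^ 4).re := by
    rw [hq_def, hw_def, re_q4]
    have : 0 ≤ ρ * s ^ 4 := by positivity
    nlinarith
  have r4 : -(q * (u ^ 4 - ((s:ℂ) * w) ^ 4)).re ≤ ρ * (3 * ‖p‖ * (4 * M ^ 3)) := by
    calc -(q * (u ^ 4 - ((s:ℂ) * w) ^ 4)).re ≤ ‖q * (u ^ 4 - ((s:ℂ) * w) ^ 4)‖ := by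
          rw [← norm_neg, ← Complex.neg_re]; exact Complex.re_le_norm _
    _ = ρ * ‖u ^ 4 - ((s:ℂ) * w) ^ 4‖ := by rw [norm_mul, hq_def, qq_norm ρ α hρ.le]
    _ ≤ ρ * (3 * ‖p‖ * (4 * M ^ 3)) := by gcongr
  have hp1 : (1 + |s|) ≤ (1 + |s|) ^ 3 := by
    calc (1 + |s|) = (1 + |s|)^1 := (pow_one _).symm
    _ ≤ (1 + |s|)^3 := pow_le_pow_right₀ hs1 (by norm_num)
  have hp2 : (1 + |s|) ^ 2 ≤ (1 + |s|) ^ 3 := pow_le_pow_right₀ hs1 (by norm_num)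
  have hK2 : K ≤ K ^ 3 := by nlinarith [mul_nonneg (mul_nonneg (by linarith : (0:ℝ) ≤ K) (by linarith : (0:ℝ) ≤ K - 1)) (by linarith : (0:ℝ) ≤ K + 1)]
  have hK3 : K ^ 2 ≤ K ^ 3 := by nlinarith [mul_nonneg (mul_nonneg (by linarith : (0:ℝ) ≤ K) (by linarith : (0:ℝ) ≤ K)) (by linarith : (0:ℝ) ≤ K - 1)]
  have hCC : ‖b₁‖ * M + ‖b₂‖ * M^2 + ρ * (3 * ‖p‖ * (4 * M^3)) ≤ CC ρ b₁ b₂ p * (1 + |s|)^3 := by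
    rw [CC, hM_def, ← hK_def]
    have n1 : ‖b₁‖ * (K * (1+|s|)) ≤ ‖b₁‖ * K * (1+|s|)^3 := by nlinarith [norm_nonneg b₁, mul_le_mul_of_nonneg_left hp1 (mul_nonneg (norm_nonneg b₁) (by linarith : (0:ℝ) ≤ K))]
    have n2 : ‖b₂‖ * (K * (1+|s|))^2 ≤ ‖b₂‖ * K^2 * (1+|s|)^3 := by
      have : (K * (1+|s|))^2 = K^2 * (1+|s|)^2 := by ring
      rw [this]
      nlinarith [norm_nonneg b₂, mul_le_mul_of_nonneg_left hp2 (mul_nonneg (norm_nonneg b₂) (by positivity : (0:ℝ) ≤ K^2))]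
    have n3 : ρ * (3 * ‖p‖ * (4 * (K * (1+|s|))^3)) = 12 * ρ * ‖p‖ * K^3 * (1+|s|)^3 := by ring
    linarith
  linarith [r1, r2, r3, r4, hCC]

noncomputable def Ep (b₁ b₂ q t : ℂ) : ℂ := b₁ + 2 * b₂ * t - 4 * q * t ^ 3
noncomputable def Ff (b₁ b₂ q p : ℂ) (α dd τ s : ℝ) : ℂ :=
  Complex.exp (Ee b₁ b₂ q (Pt p α dd τ s)) * wd α dd τ
noncomputable def Fd (b₁ b₂ q p : ℂ) (α dd τ s : ℝ) : ℂ :=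
  (Ep b₁ b₂ q (Pt p α dd τ s) * (p + Complex.I * dd * s * wd α dd τ) + Complex.I * dd) *
    Complex.exp (Ee b₁ b₂ q (Pt p α dd τ s)) * wd α dd τ
noncomputable def Gg (b₁ b₂ q p : ℂ) (α dd τ s : ℝ) : ℂ :=
  Complex.exp (Ee b₁ b₂ q (Pt p α dd τ s)) * (p + Complex.I * dd * s * wd α dd τ)

lemma hasDerivAt_Ee (b₁ b₂ q t : ℂ) : HasDerivAt (Ee b₁ b₂ q) (Ep b₁ b₂ q t) t := by
  have h : HasDerivAt (fun t : ℂ => b₁ * t + b₂ * t ^ 2 - q * t ^ 4)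
      (b₁ * 1 + b₂ * (2 * t ^ 1) - q * (4 * t ^ 3)) t := by
    exact (((hasDerivAt_id t).const_mul b₁).add ((hasDerivAt_pow 2 t).const_mul b₂)).sub
      ((hasDerivAt_pow 4 t).const_mul q)
  have h2 : b₁ * 1 + b₂ * (2 * t ^ 1) - q * (4 * t ^ 3) = Ep b₁ b₂ q t := by rw [Ep]; ring
  rw [h2] at h
  exact h

-- derivative in τ
lemma hasDerivAt_Ff_tau (b₁ b₂ q p : ℂ) (α dd s : ℝ) (τ : ℝ) :
    HasDerivAt (fun τ => Ff b₁ b₂ q p α dd τ s) (Fd b₁ b₂ q p α dd τ s) τ := by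
  have hcurve : ∀ ζ : ℂ, HasDerivAt (fun ζ : ℂ => Complex.exp (((α : ℂ) + ζ * dd) * Complex.I))
      ((dd : ℂ) * Complex.I * Complex.exp (((α : ℂ) + ζ * dd) * Complex.I)) ζ := by
    intro ζ
    have h1 : HasDerivAt (fun ζ : ℂ => ((α : ℂ) + ζ * dd) * Complex.I) ((dd : ℂ) * Complex.I) ζ := by
      simpa using (((hasDerivAt_id ζ).mul_const (dd : ℂ)).const_add (α : ℂ)).mul_const Complex.I
    simpa [mul_comm] using h1.cexp
  have hQ : HasDerivAt (fun ζ : ℂ => ζ * p + (s : ℂ) * Complex.exp (((α : ℂ) + ζ * dd) * Complex.I))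
      (p + (s : ℂ) * ((dd : ℂ) * Complex.I * Complex.exp (((α : ℂ) + τ * dd) * Complex.I))) (τ : ℂ) := by
    have h := ((hasDerivAt_id (τ:ℂ)).mul_const p).add ((hcurve (τ:ℂ)).const_mul (s:ℂ))
    simp only [id, one_mul] at h
    exact h
  have hEc : HasDerivAt (fun ζ : ℂ => Complex.exp (Ee b₁ b₂ q (ζ * p + (s : ℂ) * Complex.exp (((α : ℂ) + ζ * dd) * Complex.I))))
      (Complex.exp (Ee b₁ b₂ q ((τ:ℂ) * p + (s : ℂ) * Complex.exp (((α : ℂ) + τ * dd) * Complex.I))) *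
        (Ep b₁ b₂ q ((τ:ℂ) * p + (s : ℂ) * Complex.exp (((α : ℂ) + τ * dd) * Complex.I)) *
          (p + (s : ℂ) * ((dd : ℂ) * Complex.I * Complex.exp (((α : ℂ) + τ * dd) * Complex.I))))) (τ : ℂ) := by
    exact ((hasDerivAt_Ee b₁ b₂ q ((τ:ℂ) * p + (s : ℂ) * Complex.exp (((α : ℂ) + τ * dd) * Complex.I))).comp (τ:ℂ) hQ).cexp
  have hFc : HasDerivAt (fun ζ : ℂ =>
      Complex.exp (Ee b₁ b₂ q (ζ * p + (s : ℂ) * Complex.exp (((α : ℂ) + ζ * dd) * Complex.I))) *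
        Complex.exp (((α : ℂ) + ζ * dd) * Complex.I))
      ((Ep b₁ b₂ q ((τ:ℂ) * p + (s:ℂ) * Complex.exp (((α : ℂ) + τ * dd) * Complex.I)) *
          (p + Complex.I * dd * s * Complex.exp (((α : ℂ) + τ * dd) * Complex.I)) + Complex.I * dd) *
        Complex.exp (Ee b₁ b₂ q ((τ:ℂ) * p + (s:ℂ) * Complex.exp (((α : ℂ) + τ * dd) * Complex.I))) *
        Complex.exp (((α : ℂ) + τ * dd) * Complex.I)) (τ : ℂ) := by
    have := hEc.mul (hcurve (τ:ℂ))
    exact this.congr_deriv (by ring)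
  have hreal := hFc.comp_ofReal
  have heq : (fun τ : ℝ => Complex.exp (Ee b₁ b₂ q ((τ:ℂ) * p + (s : ℂ) * Complex.exp (((α : ℂ) + (τ:ℂ) * dd) * Complex.I))) *
      Complex.exp (((α : ℂ) + (τ:ℂ) * dd) * Complex.I)) = fun τ : ℝ => Ff b₁ b₂ q p α dd τ s := by
    funext τ
    rw [Ff, Pt, wd]
    push_cast
    ring_nf
  rw [heq] at hreal
  convert hreal using 1
  rw [Fd, Pt, wd]
  push_cast
  ring_nf

-- derivative in s of Gg
lemma hasDerivAt_Gg_s (b₁ b₂ q p : ℂ) (α dd τ : ℝ) (s : ℝ) :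
    HasDerivAt (fun s => Gg b₁ b₂ q p α dd τ s) (Fd b₁ b₂ q p α dd τ s) s := by
  set w : ℂ := wd α dd τ with hw
  have hQ : HasDerivAt (fun ζ : ℂ => (τ : ℂ) * p + ζ * w) w (s : ℂ) := by
    simpa using ((hasDerivAt_id (s:ℂ)).mul_const w).const_add ((τ:ℂ) * p)
  have hlin : HasDerivAt (fun ζ : ℂ => p + Complex.I * dd * ζ * w) (Complex.I * dd * w) (s : ℂ) := by
    have : HasDerivAt (fun ζ : ℂ => Complex.I * dd * ζ * w) (Complex.I * dd * w) (s : ℂ) := by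
      simpa [mul_assoc, mul_comm, mul_left_comm] using ((hasDerivAt_id (s:ℂ)).const_mul (Complex.I * dd)).mul_const w
    simpa using this.const_add p
  have hEc : HasDerivAt (fun ζ : ℂ => Complex.exp (Ee b₁ b₂ q ((τ:ℂ) * p + ζ * w)))
      (Complex.exp (Ee b₁ b₂ q ((τ:ℂ) * p + (s:ℂ) * w)) * (Ep b₁ b₂ q ((τ:ℂ) * p + (s:ℂ) * w) * w)) (s : ℂ) := by
    exact ((hasDerivAt_Ee b₁ b₂ q ((τ:ℂ) * p + (s:ℂ) * w)).comp (s:ℂ) hQ).cexp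
  have hGc : HasDerivAt (fun ζ : ℂ => Complex.exp (Ee b₁ b₂ q ((τ:ℂ) * p + ζ * w)) * (p + Complex.I * dd * ζ * w))
      ((Ep b₁ b₂ q ((τ:ℂ) * p + (s:ℂ) * w) * (p + Complex.I * dd * s * w) + Complex.I * dd) *
        Complex.exp (Ee b₁ b₂ q ((τ:ℂ) * p + (s:ℂ) * w)) * w) (s : ℂ) := by
    have := hEc.mul hlin
    exact this.congr_deriv (by ring)
  have hreal := hGc.comp_ofReal
  have heq : (fun s : ℝ => Complex.exp (Ee b₁ b₂ q ((τ:ℂ) * p + (s:ℂ) * w)) * (p + Complex.I * dd * (s:ℂ) * w))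
      = fun s : ℝ => Gg b₁ b₂ q p α dd τ s := by
    funext s; rw [Gg, Pt]
  rw [heq] at hreal
  convert hreal using 1
  rfl

lemma CC3_nonneg (ρ : ℝ) (hρ : 0 ≤ ρ) (b₁ b₂ p : ℂ) : 0 ≤ CC3 ρ b₁ b₂ p := by
  rw [CC3, Kc]; positivity

lemma Ep_norm (ρ α dd : ℝ) (hρ : 0 < ρ) (b₁ b₂ p : ℂ) (δ τ s : ℝ) (hδ : 0 ≤ δ) (hδ2 : δ ≤ 2)
    (hτ : τ ∈ Set.Icc (-δ) (1 + δ)) :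
    ‖Ep b₁ b₂ (qq ρ α) (Pt p α dd τ s)‖ ≤ CC3 ρ b₁ b₂ p * (1 + |s|) ^ 3 := by
  set u := Pt p α dd τ s with hu_def
  set K := Kc p with hK_def
  have hK1 : 1 ≤ K := Kc_one_le p
  have hs1 : (1:ℝ) ≤ 1 + |s| := by have := abs_nonneg s; linarith
  have hu : ‖u‖ ≤ K * (1 + |s|) := Pt_norm p α dd δ τ s hδ hδ2 hτ
  have h1 : ‖Ep b₁ b₂ (qq ρ α) u‖ ≤ ‖b₁‖ + 2 * ‖b₂‖ * ‖u‖ + 4 * ρ * ‖u‖ ^ 3 := by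
    rw [Ep]
    calc ‖b₁ + 2 * b₂ * u - 4 * qq ρ α * u ^ 3‖
        ≤ ‖b₁ + 2 * b₂ * u‖ + ‖4 * qq ρ α * u ^ 3‖ := norm_sub_le _ _
      _ ≤ ‖b₁‖ + ‖2 * b₂ * u‖ + ‖4 * qq ρ α * u ^ 3‖ := by linarith [norm_add_le b₁ (2 * b₂ * u)]
      _ = ‖b₁‖ + 2 * ‖b₂‖ * ‖u‖ + 4 * ρ * ‖u‖ ^ 3 := by
          rw [norm_mul, norm_mul, norm_mul, norm_mul, norm_pow, qq_norm ρ α hρ.le]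
          norm_num
  have hun : 0 ≤ ‖u‖ := norm_nonneg u
  have hu3 : ‖u‖ ^ 3 ≤ (K * (1 + |s|)) ^ 3 := pow_le_pow_left₀ hun hu 3
  have hp1 : (1 + |s|) ≤ (1 + |s|) ^ 3 := by
    calc (1 + |s|) = (1 + |s|) ^ 1 := (pow_one _).symm
    _ ≤ (1 + |s|) ^ 3 := pow_le_pow_right₀ hs1 (by norm_num)
  have hps : (1:ℝ) ≤ (1 + |s|) ^ 3 := one_le_pow₀ hs1
  rw [CC3, ← hK_def]
  have e1 : ‖b₁‖ ≤ ‖b₁‖ * (1 + |s|) ^ 3 := by nlinarith [norm_nonneg b₁]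
  have e2 : 2 * ‖b₂‖ * ‖u‖ ≤ 2 * ‖b₂‖ * K * (1 + |s|) ^ 3 := by
    nlinarith [norm_nonneg b₂, mul_le_mul_of_nonneg_left hu (by positivity : (0:ℝ) ≤ 2 * ‖b₂‖),
      mul_le_mul_of_nonneg_left hp1 (by positivity : (0:ℝ) ≤ 2 * ‖b₂‖ * K)]
  have e3 : 4 * ρ * ‖u‖ ^ 3 ≤ 4 * ρ * K ^ 3 * (1 + |s|) ^ 3 := by
    have : (K * (1 + |s|)) ^ 3 = K ^ 3 * (1 + |s|) ^ 3 := by ring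
    nlinarith [mul_le_mul_of_nonneg_left hu3 (by positivity : (0:ℝ) ≤ 4 * ρ)]
  nlinarith

set_option maxHeartbeats 1000000 in
lemma deform_main (ρ α dd : ℝ) (hρ : 0 < ρ) (hdd : 0 ≤ dd) (hA : 4 * dd < π / 2)
    (b₁ b₂ p : ℂ) :
    (∀ τ ∈ Set.Icc (0:ℝ) 1, Integrable (fun s => Ff b₁ b₂ (qq ρ α) p α dd τ s)) ∧
    ∫ s : ℝ, Ff b₁ b₂ (qq ρ α) p α dd 0 s = ∫ s : ℝ, Ff b₁ b₂ (qq ρ α) p α dd 1 s := by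
  have hπ := Real.pi_pos
  set δ : ℝ := (π/2 - 4*dd)/(4*dd+1) with hδdef
  have hδ : 0 < δ := div_pos (by linarith) (by linarith)
  have hδ2 : δ ≤ 2 := by
    rw [hδdef, div_le_iff₀ (by linarith : (0:ℝ) < 4*dd+1)]
    nlinarith [Real.pi_le_four]
  have hδmul : δ * (4*dd+1) = π/2 - 4*dd := div_mul_cancel₀ _ (by linarith)
  have hδA : (1+δ) * (4*dd) = π/2 - δ := by nlinarith
  set m : ℝ := Real.cos ((1+δ)*(4*dd)) with hmdef
  have hm : 0 < m := Real.cos_pos_of_mem_Ioo ⟨by nlinarith, by nlinarith⟩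
  have hIccsub : Set.Icc (0:ℝ) 1 ⊆ Set.Icc (-δ) (1+δ) := fun τ hτ => ⟨by linarith [hτ.1], by linarith [hτ.2]⟩
  have hcos : ∀ τ ∈ Set.Icc (-δ) (1+δ), m ≤ Real.cos (4*(τ*dd)) := by
    intro τ hτ
    have hτ3 : |τ| ≤ 1+δ := abs_le.mpr ⟨by linarith [hτ.1], hτ.2⟩
    have habs : |4*(τ*dd)| ≤ (1+δ)*(4*dd) := by
      rw [abs_mul, abs_mul, abs_of_nonneg hdd, abs_of_nonneg (by norm_num : (0:ℝ) ≤ 4)]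
      nlinarith [abs_nonneg τ]
    calc m ≤ Real.cos |4*(τ*dd)| :=
          Real.cos_le_cos_of_nonneg_of_le_pi (abs_nonneg _) (by nlinarith) habs
    _ = Real.cos (4*(τ*dd)) := Real.cos_abs _
  obtain ⟨D, hD⟩ := absorb (ρ*m) (CC ρ b₁ b₂ p) (by positivity)
  have hre : ∀ τ ∈ Set.Icc (-δ) (1+δ), ∀ s : ℝ,
      (Ee b₁ b₂ (qq ρ α) (Pt p α dd τ s)).re ≤ D - 2*s^2 := by
    intro τ hτ s
    have h1 := master_re ρ α dd hρ b₁ b₂ p δ m τ s hδ.le hδ2 hτ (hcos τ hτ)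
    have h2 := hD (|s|) (abs_nonneg s)
    have hs4 : |s|^4 = s^4 := by rw [← abs_pow]; exact abs_of_nonneg (by positivity)
    have hs2 : |s|^2 = s^2 := sq_abs s
    rw [hs4, hs2] at h2
    linarith
  have hnormexp : ∀ τ s, ‖Complex.exp (Ee b₁ b₂ (qq ρ α) (Pt p α dd τ s))‖
      = Real.exp ((Ee b₁ b₂ (qq ρ α) (Pt p α dd τ s)).re) := by
    intro τ s; rw [Complex.norm_exp]
  have hFnorm : ∀ τ ∈ Set.Icc (-δ) (1+δ), ∀ s : ℝ,
      ‖Ff b₁ b₂ (qq ρ α) p α dd τ s‖ ≤ Real.exp D * Real.exp (-(2*s^2)) := by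
    intro τ hτ s
    rw [Ff, norm_mul, wd_norm, mul_one, hnormexp, ← Real.exp_add]
    exact Real.exp_le_exp.mpr (by linarith [hre τ hτ s])
  have hcont : ∀ τ, Continuous (fun s => Ff b₁ b₂ (qq ρ α) p α dd τ s) := by
    intro τ
    simp only [Ff, Ee, Pt, wd]
    fun_prop
  have hcontFd : ∀ τ, Continuous (fun s => Fd b₁ b₂ (qq ρ α) p α dd τ s) := by
    intro τ
    simp only [Fd, Ep, Ee, Pt, wd]
    fun_prop
  have hIntF : ∀ τ ∈ Set.Icc (-δ) (1+δ), Integrable (fun s => Ff b₁ b₂ (qq ρ α) p α dd τ s) := by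
    intro τ hτ
    apply Integrable.mono' ((integrable_exp_neg_mul_sq (by norm_num : (0:ℝ) < 2)).const_mul (Real.exp D))
      (hcont τ).aestronglyMeasurable
    refine ae_of_all _ fun s => ?_
    simpa [neg_mul] using hFnorm τ hτ s
  set Bd : ℝ := (CC3 ρ b₁ b₂ p * (‖p‖ + dd) + dd) * 40 * Real.exp D with hBddef
  have hCC3 := CC3_nonneg ρ hρ.le b₁ b₂ p
  have hlinb : ∀ τ s : ℝ, ‖p + Complex.I * dd * s * wd α dd τ‖ ≤ (‖p‖ + dd) * (1 + |s|) := by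
    intro τ s
    calc ‖p + Complex.I * dd * s * wd α dd τ‖ ≤ ‖p‖ + ‖Complex.I * dd * s * wd α dd τ‖ := norm_add_le _ _
      _ = ‖p‖ + dd * |s| := by
          rw [norm_mul, norm_mul, norm_mul, wd_norm, Complex.norm_I, Complex.norm_real,
            Complex.norm_real, Real.norm_eq_abs, Real.norm_eq_abs, abs_of_nonneg hdd]
          ring
      _ ≤ (‖p‖ + dd) * (1 + |s|) := by nlinarith [norm_nonneg p, abs_nonneg s]
  have habs4 : ∀ s : ℝ, (1 + |s|) ^ 4 * Real.exp (-(2*s^2)) ≤ 40 * Real.exp (-s^2) := by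
    intro s
    have h1 := poly_exp (|s|) (abs_nonneg s)
    rw [sq_abs] at h1
    have h2 : Real.exp (s^2) * Real.exp (-(2*s^2)) = Real.exp (-s^2) := by
      rw [← Real.exp_add]; congr 1; ring
    nlinarith [Real.exp_pos (-(2*s^2)), Real.exp_pos (-s^2)]
  have hFdnorm : ∀ τ ∈ Set.Icc (-δ) (1+δ), ∀ s : ℝ,
      ‖Fd b₁ b₂ (qq ρ α) p α dd τ s‖ ≤ Bd * Real.exp (-s^2) := by
    intro τ hτ s
    have hs1 : (1:ℝ) ≤ 1 + |s| := by have := abs_nonneg s; linarith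
    have hEp := Ep_norm ρ α dd hρ b₁ b₂ p δ τ s hδ.le hδ2 hτ
    have hlin := hlinb τ s
    have hhead : ‖Ep b₁ b₂ (qq ρ α) (Pt p α dd τ s) * (p + Complex.I * dd * s * wd α dd τ) + Complex.I * dd‖
        ≤ (CC3 ρ b₁ b₂ p * (‖p‖ + dd) + dd) * (1 + |s|) ^ 4 := by
      calc ‖Ep b₁ b₂ (qq ρ α) (Pt p α dd τ s) * (p + Complex.I * dd * s * wd α dd τ) + Complex.I * dd‖
          ≤ ‖Ep b₁ b₂ (qq ρ α) (Pt p α dd τ s)‖ * ‖p + Complex.I * dd * s * wd α dd τ‖ + dd := by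
            have := norm_add_le (Ep b₁ b₂ (qq ρ α) (Pt p α dd τ s) * (p + Complex.I * dd * s * wd α dd τ)) (Complex.I * dd)
            rw [norm_mul] at this
            have hId : ‖Complex.I * (dd:ℂ)‖ = dd := by
              rw [norm_mul, Complex.norm_I, Complex.norm_real, Real.norm_eq_abs, abs_of_nonneg hdd, one_mul]
            rw [hId] at this
            exact this
        _ ≤ CC3 ρ b₁ b₂ p * (1+|s|)^3 * ((‖p‖ + dd) * (1 + |s|)) + dd := by
            gcongr
        _ ≤ (CC3 ρ b₁ b₂ p * (‖p‖ + dd) + dd) * (1 + |s|) ^ 4 := by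
            have h4 : (1:ℝ) ≤ (1 + |s|)^4 := one_le_pow₀ hs1
            have : CC3 ρ b₁ b₂ p * (1+|s|)^3 * ((‖p‖ + dd) * (1 + |s|)) = CC3 ρ b₁ b₂ p * (‖p‖ + dd) * (1+|s|)^4 := by ring
            nlinarith [mul_nonneg (mul_nonneg hCC3 (by positivity : (0:ℝ) ≤ (‖p‖+dd))) (by positivity : (0:ℝ) ≤ (1+|s|)^4), hdd]
    have hexp : ‖Complex.exp (Ee b₁ b₂ (qq ρ α) (Pt p α dd τ s))‖ ≤ Real.exp D * Real.exp (-(2*s^2)) := by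
      rw [hnormexp, ← Real.exp_add]
      exact Real.exp_le_exp.mpr (by linarith [hre τ hτ s])
    rw [Fd, norm_mul, norm_mul, wd_norm, mul_one]
    calc ‖Ep b₁ b₂ (qq ρ α) (Pt p α dd τ s) * (p + Complex.I * dd * s * wd α dd τ) + Complex.I * dd‖ *
          ‖Complex.exp (Ee b₁ b₂ (qq ρ α) (Pt p α dd τ s))‖
        ≤ ((CC3 ρ b₁ b₂ p * (‖p‖ + dd) + dd) * (1 + |s|) ^ 4) * (Real.exp D * Real.exp (-(2*s^2))) := by
          apply mul_le_mul hhead hexp (norm_nonneg _) (by positivity)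
      _ = ((CC3 ρ b₁ b₂ p * (‖p‖ + dd) + dd) * Real.exp D) * ((1 + |s|) ^ 4 * Real.exp (-(2*s^2))) := by ring
      _ ≤ ((CC3 ρ b₁ b₂ p * (‖p‖ + dd) + dd) * Real.exp D) * (40 * Real.exp (-s^2)) := by
          apply mul_le_mul_of_nonneg_left (habs4 s) (by positivity)
      _ = Bd * Real.exp (-s^2) := by rw [hBddef]; ring
  have hGnorm : ∀ τ ∈ Set.Icc (-δ) (1+δ), ∀ s : ℝ,
      ‖Gg b₁ b₂ (qq ρ α) p α dd τ s‖ ≤ ((‖p‖ + dd) * 40 * Real.exp D) * Real.exp (-s^2) := by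
    intro τ hτ s
    have hs1 : (1:ℝ) ≤ 1 + |s| := by have := abs_nonneg s; linarith
    have hlin := hlinb τ s
    have hexp : ‖Complex.exp (Ee b₁ b₂ (qq ρ α) (Pt p α dd τ s))‖ ≤ Real.exp D * Real.exp (-(2*s^2)) := by
      rw [hnormexp, ← Real.exp_add]
      exact Real.exp_le_exp.mpr (by linarith [hre τ hτ s])
    rw [Gg, norm_mul]
    have h14 : (1 + |s|) ≤ (1 + |s|)^4 := by
      calc (1 + |s|) = (1 + |s|)^1 := (pow_one _).symm
      _ ≤ (1 + |s|)^4 := pow_le_pow_right₀ hs1 (by norm_num)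
    calc ‖Complex.exp (Ee b₁ b₂ (qq ρ α) (Pt p α dd τ s))‖ * ‖p + Complex.I * dd * s * wd α dd τ‖
        ≤ (Real.exp D * Real.exp (-(2*s^2))) * ((‖p‖ + dd) * (1 + |s|)) := by
          apply mul_le_mul hexp hlin (norm_nonneg _) (by positivity)
      _ ≤ (Real.exp D * Real.exp (-(2*s^2))) * ((‖p‖ + dd) * (1 + |s|)^4) := by
          have : (0:ℝ) ≤ ‖p‖ + dd := by positivity
          nlinarith [Real.exp_pos D, Real.exp_pos (-(2*s^2)), mul_le_mul_of_nonneg_left h14 this,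
            mul_pos (Real.exp_pos D) (Real.exp_pos (-(2*s^2)))]
      _ = (‖p‖ + dd) * Real.exp D * ((1 + |s|)^4 * Real.exp (-(2*s^2))) := by ring
      _ ≤ (‖p‖ + dd) * Real.exp D * (40 * Real.exp (-s^2)) := by
          apply mul_le_mul_of_nonneg_left (habs4 s) (by positivity)
      _ = ((‖p‖ + dd) * 40 * Real.exp D) * Real.exp (-s^2) := by ring
  have hgauss1 : Integrable (fun s : ℝ => Bd * Real.exp (-s^2)) := by
    have : Integrable (fun s : ℝ => Real.exp (-(1:ℝ)*s^2)) := integrable_exp_neg_mul_sq one_pos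
    simpa [neg_mul] using this.const_mul Bd
  have htendsto : ∀ (c : ℝ), Tendsto (fun s : ℝ => c * Real.exp (-s^2)) atTop (𝓝 0)
      ∧ Tendsto (fun s : ℝ => c * Real.exp (-s^2)) atBot (𝓝 0) := by
    intro c
    have hbase : Tendsto (fun t : ℝ => c * Real.exp (-t^2)) atTop (𝓝 0) := by
      have h1 : Tendsto (fun t : ℝ => -t^2) atTop atBot :=
        tendsto_neg_atTop_atBot.comp (tendsto_pow_atTop (by norm_num : 2 ≠ 0))
      have h2 : Tendsto (fun t : ℝ => Real.exp (-t^2)) atTop (𝓝 0) :=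
        Real.tendsto_exp_atBot.comp h1
      simpa using h2.const_mul c
    constructor
    · exact hbase
    · have := hbase.comp tendsto_abs_atBot_atTop
      apply this.congr
      intro s
      simp [sq_abs]
  set q : ℂ := qq ρ α with hqdef
  set II : ℝ → ℂ := fun τ => ∫ s : ℝ, Ff b₁ b₂ q p α dd τ s with hIIdef
  have key : ∀ τ₀ ∈ Set.Icc (0:ℝ) 1, HasDerivAt II 0 τ₀ := by
    intro τ₀ hτ₀
    have hball : ∀ τ ∈ Metric.ball τ₀ δ, τ ∈ Set.Icc (-δ) (1+δ) := by
      intro τ hτ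
      rw [Metric.mem_ball, Real.dist_eq] at hτ
      have := abs_lt.mp hτ
      exact ⟨by linarith [hτ₀.1, this.1], by linarith [hτ₀.2, this.2]⟩
    obtain ⟨hFdInt, hder⟩ := hasDerivAt_integral_of_dominated_loc_of_deriv_le
      (F := fun τ s => Ff b₁ b₂ q p α dd τ s) (F' := fun τ s => Fd b₁ b₂ q p α dd τ s)
      (x₀ := τ₀) (bound := fun s => Bd * Real.exp (-s^2)) (Metric.ball_mem_nhds τ₀ hδ)
      (Eventually.of_forall fun τ => (hcont τ).aestronglyMeasurable)
      (hIntF τ₀ (hIccsub hτ₀))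
      (hcontFd τ₀).aestronglyMeasurable
      (ae_of_all _ fun s τ hτ => hFdnorm τ (hball τ hτ) s)
      hgauss1
      (ae_of_all _ fun s τ _ => hasDerivAt_Ff_tau b₁ b₂ q p α dd s τ)
    have hzero : (∫ s : ℝ, Fd b₁ b₂ q p α dd τ₀ s) = 0 := by
      have htop : Tendsto (fun s => Gg b₁ b₂ q p α dd τ₀ s) atTop (𝓝 0) :=
        squeeze_zero_norm (fun s => hGnorm τ₀ (hIccsub hτ₀) s) (htendsto ((‖p‖ + dd) * 40 * Real.exp D)).1
      have hbot : Tendsto (fun s => Gg b₁ b₂ q p α dd τ₀ s) atBot (𝓝 0) :=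
        squeeze_zero_norm (fun s => hGnorm τ₀ (hIccsub hτ₀) s) (htendsto ((‖p‖ + dd) * 40 * Real.exp D)).2
      have := integral_of_hasDerivAt_of_tendsto
        (fun s => hasDerivAt_Gg_s b₁ b₂ q p α dd τ₀ s) hFdInt hbot htop
      simpa using this
    rw [hIIdef]
    rw [← hzero]
    exact hder
  have hconst := constant_of_has_deriv_right_zero (f := II) (a := 0) (b := 1)
    (fun τ hτ => ((key τ hτ).continuousAt).continuousWithinAt)
    (fun τ hτ => (key τ ⟨hτ.1, hτ.2.le⟩).hasDerivWithinAt)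
  exact ⟨fun τ hτ => hIntF τ (hIccsub hτ), (hconst 1 (by norm_num)).symm⟩

/-- For `π/8 < θ ≤ π/2`, `x ∈ ℂ`, `r > 0`, `y = r e^{iθ}` and
`g(t) = exp(r^{4/3} f_θ(t) − x y^{2/3} t²)`, the integrals of `g` along the
rotated real line `{s e^{−iθ/3}}` and along the steepest-descent line through
`t₂ = 4^{−1/3} e^{5iπ/6}` with direction `e^{i(π−4θ)/6}` are both absolutely
convergent and equal. -/
theorem pearcey_path_deformation_case2 (θ : ℝ) (hθ : θ ∈ Set.Ioc (π / 8) (π / 2))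
    (x : ℂ) (r : ℝ) (hr : 0 < r) :
    let y : ℂ := (r : ℂ) * Complex.exp (Complex.I * (θ : ℂ))
    let g : ℂ → ℂ := fun t =>
      Complex.exp ((r : ℂ) ^ ((4 : ℂ) / 3) * f θ t - x * y ^ ((2 : ℂ) / 3) * t ^ 2)
    (Integrable fun s : ℝ =>
        g ((s : ℂ) * Complex.exp (-Complex.I * ((θ : ℂ) / 3))) *
          Complex.exp (-Complex.I * ((θ : ℂ) / 3))) ∧
    (Integrable fun s : ℝ =>
        g ((4 : ℂ) ^ (-(1 : ℂ) / 3) * Complex.exp (Complex.I * (5 * (π : ℂ) / 6)) +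
            (s : ℂ) * Complex.exp (Complex.I * (((π : ℂ) - 4 * (θ : ℂ)) / 6))) *
          Complex.exp (Complex.I * (((π : ℂ) - 4 * (θ : ℂ)) / 6))) ∧
    (∫ s : ℝ,
        g ((s : ℂ) * Complex.exp (-Complex.I * ((θ : ℂ) / 3))) *
          Complex.exp (-Complex.I * ((θ : ℂ) / 3))) =
      ∫ s : ℝ,
        g ((4 : ℂ) ^ (-(1 : ℂ) / 3) * Complex.exp (Complex.I * (5 * (π : ℂ) / 6)) +
            (s : ℂ) * Complex.exp (Complex.I * (((π : ℂ) - 4 * (θ : ℂ)) / 6))) *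
          Complex.exp (Complex.I * (((π : ℂ) - 4 * (θ : ℂ)) / 6)) := by
  intro y g
  obtain ⟨hθ1, hθ2⟩ := hθ
  have hπ := Real.pi_pos
  have hρ : 0 < r ^ ((4:ℝ)/3) := Real.rpow_pos_of_pos hr _
  have hdd : 0 ≤ (π - 2*θ)/6 := by linarith
  have hA : 4 * ((π - 2*θ)/6) < π/2 := by linarith
  have h := deform_main (r ^ ((4:ℝ)/3)) (-θ/3) ((π - 2*θ)/6) hρ hdd hA
    (qq (r ^ ((4:ℝ)/3)) (-θ/3) * Complex.I) (-(x * y^((2:ℂ)/3)))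
    ((4:ℂ)^(-(1:ℂ)/3) * Complex.exp (Complex.I * (5*(π:ℂ)/6)))
  have hgEe : ∀ t : ℂ, (r:ℂ)^((4:ℂ)/3) * f θ t - x * y^((2:ℂ)/3) * t^2
      = Ee (qq (r ^ ((4:ℝ)/3)) (-θ/3) * Complex.I) (-(x * y^((2:ℂ)/3))) (qq (r ^ ((4:ℝ)/3)) (-θ/3)) t := by
    intro t
    have hq : ((r:ℂ))^((4:ℂ)/3) * Complex.exp (Complex.I * (4*(θ:ℂ)/3)) = qq (r ^ ((4:ℝ)/3)) (-θ/3) := by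
      rw [qq]
      have h1 : ((r:ℂ))^((4:ℂ)/3) = ((r ^ ((4:ℝ)/3) : ℝ) : ℂ) := by
        rw [Complex.ofReal_cpow hr.le]
        norm_num
      rw [h1]
      congr 1
      push_cast
      ring
    rw [f, Ee, ← hq]
    ring
  have hw0 : Complex.exp (-Complex.I * ((θ:ℂ)/3)) = wd (-θ/3) ((π - 2*θ)/6) 0 := by
    rw [wd]; congr 1; push_cast; ring
  have hw1 : Complex.exp (Complex.I * (((π:ℂ) - 4*(θ:ℂ))/6)) = wd (-θ/3) ((π - 2*θ)/6) 1 := by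
    rw [wd]; congr 1; push_cast; ring
  have he0 : (fun s : ℝ => g ((s:ℂ) * Complex.exp (-Complex.I * ((θ:ℂ)/3))) *
        Complex.exp (-Complex.I * ((θ:ℂ)/3)))
      = fun s : ℝ => Ff (qq (r ^ ((4:ℝ)/3)) (-θ/3) * Complex.I) (-(x * y^((2:ℂ)/3)))
          (qq (r ^ ((4:ℝ)/3)) (-θ/3)) ((4:ℂ)^(-(1:ℂ)/3) * Complex.exp (Complex.I * (5*(π:ℂ)/6)))
          (-θ/3) ((π - 2*θ)/6) 0 s := by
    funext s
    have hpt : Pt ((4:ℂ)^(-(1:ℂ)/3) * Complex.exp (Complex.I * (5*(π:ℂ)/6))) (-θ/3) ((π - 2*θ)/6) 0 s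
        = (s:ℂ) * Complex.exp (-Complex.I * ((θ:ℂ)/3)) := by
      rw [Pt, ← hw0]; push_cast; ring
    rw [Ff, hpt, ← hgEe, ← hw0]
  have he1 : (fun s : ℝ => g ((4:ℂ)^(-(1:ℂ)/3) * Complex.exp (Complex.I * (5*(π:ℂ)/6)) +
        (s:ℂ) * Complex.exp (Complex.I * (((π:ℂ) - 4*(θ:ℂ))/6))) *
        Complex.exp (Complex.I * (((π:ℂ) - 4*(θ:ℂ))/6)))
      = fun s : ℝ => Ff (qq (r ^ ((4:ℝ)/3)) (-θ/3) * Complex.I) (-(x * y^((2:ℂ)/3)))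
          (qq (r ^ ((4:ℝ)/3)) (-θ/3)) ((4:ℂ)^(-(1:ℂ)/3) * Complex.exp (Complex.I * (5*(π:ℂ)/6)))
          (-θ/3) ((π - 2*θ)/6) 1 s := by
    funext s
    have hpt : Pt ((4:ℂ)^(-(1:ℂ)/3) * Complex.exp (Complex.I * (5*(π:ℂ)/6))) (-θ/3) ((π - 2*θ)/6) 1 s
        = (4:ℂ)^(-(1:ℂ)/3) * Complex.exp (Complex.I * (5*(π:ℂ)/6)) +
          (s:ℂ) * Complex.exp (Complex.I * (((π:ℂ) - 4*(θ:ℂ))/6)) := by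
      rw [Pt, ← hw1]; push_cast; ring
    rw [Ff, hpt, ← hgEe, ← hw1]
  refine ⟨?_, ?_, ?_⟩
  · rw [he0]; exact h.1 0 (by norm_num)
  · rw [he1]; exact h.1 1 (by norm_num)
  · rw [he0, he1]; exact h.2
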